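/- Let P ∈ k[t] be monic irreducible with P and D(P) coprime in k[t] (in the meromorphic model this holds for every monic irreducible P), let n = deg(P), and let y_1, …, y_n be a k-basis of Λ_P. Then for every integer r ≥ 1 the elements D^j(y_i), for i = 1, …, n and j = 0, …, r−1, form a k-basis of Λ_{P^r}. -/

import Mathlib

open Polynomial
set_option synthInstance.maxHeartbeats 1000000
set_option maxHeartbeats 1000000

noncomputable section

variable {F : Type*} [Field F]

/-- The fixed subfield `k = F^τ` of a difference field `(F, τ)`. -/
def kfix (τ : F →+* F) : Subfield F := RingHom.eqLocusField τ (RingHom.id F)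

/-- `τ` as a `k`-linear endomorphism of `F`. -/
def tauLin (τ : F →+* F) : F →ₗ[kfix τ] F where
  toFun := τ
  map_add' := map_add τ
  map_smul' := by
    intro c x
    show τ ((c : F) * x) = (c : F) * τ x
    rw [map_mul, c.2]
    rfl

/-- The Carlitz module map `a ↦ C_a = a(μ_ν − τ)` : the unique `k`-algebra morphism from
`k[t]` to the `k`-linear endomorphisms of `F` sending `t` to `μ_ν − τ`. -/
def carlitz (τ : F →+* F) (ν : F) : Polynomial (kfix τ) →ₐ[kfix τ] Module.End (kfix τ) F :=
  Polynomial.aeval (LinearMap.mulLeft (kfix τ) ν - tauLin τ)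

section
variable (τ : F →+* F) (ν : F) (D : Derivation ℤ F F)

lemma mem_kfix (x : F) : x ∈ kfix τ ↔ τ x = x := Iff.rfl

def Dk (hDτ : ∀ x : F, D (τ x) = τ (D x)) (c : kfix τ) : kfix τ :=
  ⟨D (c : F), by have := hDτ (c : F); rw [c.2] at this; exact ((mem_kfix τ _).2 this.symm)⟩

lemma Dk_coe (hDτ : ∀ x : F, D (τ x) = τ (D x)) (c : kfix τ) :
    ((Dk τ D hDτ c : kfix τ) : F) = D (c : F) := rfl

lemma Dk_zero (hDτ) : Dk τ D hDτ 0 = 0 := by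
  ext; simp [Dk_coe]

def deltaP (hDτ : ∀ x : F, D (τ x) = τ (D x)) (a : Polynomial (kfix τ)) : Polynomial (kfix τ) :=
  derivative a + ∑ i ∈ a.support, C (Dk τ D hDτ (a.coeff i)) * X ^ i

lemma deltaP_coeff (hDτ) (a : Polynomial (kfix τ)) (m : ℕ) :
    (deltaP τ D hDτ a).coeff m = (derivative a).coeff m + Dk τ D hDτ (a.coeff m) := by
  rw [deltaP, coeff_add]
  congr 1
  rw [finset_sum_coeff]
  simp only [coeff_C_mul, coeff_X_pow, mul_ite, mul_one, mul_zero]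
  rw [Finset.sum_ite_eq a.support m (fun i => Dk τ D hDτ (a.coeff i))]
  by_cases h : m ∈ a.support
  · simp [h]
  · simp only [h, if_false]
    rw [Polynomial.notMem_support_iff.1 h, Dk_zero]
end

section
variable (τ : F →+* F) (ν : F) (D : Derivation ℤ F F)

lemma Dk_add (hDτ) (c d : kfix τ) :
    Dk τ D hDτ (c + d) = Dk τ D hDτ c + Dk τ D hDτ d := by
  ext; simp [Dk_coe]

lemma deltaP_add (hDτ) (a b : Polynomial (kfix τ)) :
    deltaP τ D hDτ (a + b) = deltaP τ D hDτ a + deltaP τ D hDτ b := by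
  ext m
  simp only [deltaP_coeff, coeff_add, derivative_add, Dk_add]
  ring

lemma deltaP_C (hDτ) (c : kfix τ) :
    deltaP τ D hDτ (C c) = C (Dk τ D hDτ c) := by
  ext m
  rw [deltaP_coeff]
  rcases m with _ | m
  · simp
  · simp [coeff_C, Dk_zero]

lemma deltaP_mul_X (hDτ) (a : Polynomial (kfix τ)) :
    deltaP τ D hDτ (a * X) = deltaP τ D hDτ a * X + a := by
  ext m
  rcases m with _ | m
  · simp [deltaP_coeff, coeff_derivative, mul_comm, Dk_zero]
  · simp only [deltaP_coeff, coeff_add, coeff_mul_X, coeff_derivative]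
    push_cast
    ring
end

section
variable (τ : F →+* F) (ν : F) (D : Derivation ℤ F F)

lemma carlitz_X_apply (x : F) : carlitz τ ν X x = ν * x - τ x := by
  simp [carlitz, aeval_X, LinearMap.sub_apply, LinearMap.mulLeft_apply, tauLin]

lemma carlitz_C_apply (c : kfix τ) (x : F) : carlitz τ ν (C c) x = (c : F) * x := by
  simp [carlitz, aeval_C, Module.algebraMap_end_apply]
  rfl

lemma carlitz_mul_apply (a b : Polynomial (kfix τ)) (x : F) :
    carlitz τ ν (a * b) x = carlitz τ ν a (carlitz τ ν b x) := by
  rw [map_mul]; rfl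

lemma key (hν : τ ν = ν + 1) (hDτ : ∀ x : F, D (τ x) = τ (D x)) (hDν : D ν = 1)
    (a : Polynomial (kfix τ)) (x : F) :
    D (carlitz τ ν a x) = carlitz τ ν a (D x) + carlitz τ ν (deltaP τ D hDτ a) x := by
  induction a using Polynomial.induction_on generalizing x with
  | C c =>
      rw [deltaP_C, carlitz_C_apply, carlitz_C_apply, carlitz_C_apply, Dk_coe,
        Derivation.leibniz]
      simp [smul_eq_mul]; ring
  | add p q hp hq =>
      rw [deltaP_add, map_add (carlitz τ ν), map_add (carlitz τ ν)]
      simp only [LinearMap.add_apply]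
      rw [Derivation.map_add, hp, hq]; ring
  | monomial m c ih =>
      have hx : C c * X ^ (m + 1) = (C c * X ^ m) * X := by ring
      rw [hx]
      set b := C c * X ^ m with hb
      have e1 : ∀ z, carlitz τ ν (b * X) z = carlitz τ ν b (ν * z - τ z) := by
        intro z; rw [carlitz_mul_apply, carlitz_X_apply]
      have e2 : carlitz τ ν (deltaP τ D hDτ (b * X)) x
          = carlitz τ ν (deltaP τ D hDτ b) (ν * x - τ x) + carlitz τ ν b x := by
        rw [deltaP_mul_X, map_add (carlitz τ ν), LinearMap.add_apply, carlitz_mul_apply,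
          carlitz_X_apply]
      have hDφ : D (ν * x - τ x) = (ν * (D x) - τ (D x)) + x := by
        rw [Derivation.map_sub, Derivation.leibniz, hDτ, hDν]
        simp [smul_eq_mul]; ring
      rw [e1 x, e1 (D x), e2, ih (ν * x - τ x), hDφ,
        (carlitz τ ν b).map_add]
      ring

end

section
variable (τ : F →+* F) (ν : F) (D : Derivation ℤ F F)
variable (hν : τ ν = ν + 1) (hDτ : ∀ x : F, D (τ x) = τ (D x)) (hDν : D ν = 1)
variable (P : Polynomial (kfix τ))

lemma keys (hν : τ ν = ν + 1) (hDτ : ∀ x : F, D (τ x) = τ (D x)) (hDν : D ν = 1)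
    (P : Polynomial (kfix τ)) (s : ℕ) (x : F) :
    carlitz τ ν (P ^ (s + 1)) (D x) = D (carlitz τ ν (P ^ (s + 1)) x)
      - (s + 1 : ℤ) • carlitz τ ν (P ^ s * deltaP τ D hDτ P) x := by
  induction s generalizing x with
  | zero =>
      simp only [zero_add, pow_one, pow_zero, one_mul]
      have hkey : carlitz τ ν P (D x)
          = D (carlitz τ ν P x) - carlitz τ ν (deltaP τ D hDτ P) x := by
        rw [key τ ν D hν hDτ hDν P x]; ring
      rw [hkey]
      module
  | succ s ih =>
      have hp : P ^ (s + 1 + 1) = P ^ (s + 1) * P := by ring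
      have hkey : carlitz τ ν P (D x)
          = D (carlitz τ ν P x) - carlitz τ ν (deltaP τ D hDτ P) x := by
        rw [key τ ν D hν hDτ hDν P x]; ring
      rw [hp, carlitz_mul_apply, carlitz_mul_apply, hkey, (carlitz τ ν (P ^ (s+1))).map_sub,
        ih (carlitz τ ν P x)]
      have hc : carlitz τ ν (P ^ (s + 1)) (carlitz τ ν (deltaP τ D hDτ P) x)
          = carlitz τ ν (P ^ (s + 1) * deltaP τ D hDτ P) x := by
        rw [carlitz_mul_apply]
      have hc2 : carlitz τ ν (P ^ s * deltaP τ D hDτ P) (carlitz τ ν P x)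
          = carlitz τ ν (P ^ (s + 1) * deltaP τ D hDτ P) x := by
        rw [← carlitz_mul_apply]
        congr 1
        ring
      rw [hc, hc2]
      push_cast
      module

lemma mem_step (hν : τ ν = ν + 1) (hDτ : ∀ x : F, D (τ x) = τ (D x)) (hDν : D ν = 1)
    (P : Polynomial (kfix τ)) (s : ℕ) (x : F) (hx : carlitz τ ν (P ^ s) x = 0) :
    carlitz τ ν (P ^ (s + 1)) (D x) = 0 := by
  rw [keys τ ν D hν hDτ hDν P s x]
  have h1 : carlitz τ ν (P ^ (s + 1)) x = 0 := by
    have hp : P ^ (s + 1) = P * P ^ s := by ring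
    rw [hp, carlitz_mul_apply, hx, map_zero]
  have h2 : carlitz τ ν (P ^ s * deltaP τ D hDτ P) x = 0 := by
    rw [mul_comm, carlitz_mul_apply, hx, map_zero]
  rw [h1, h2, map_zero, smul_zero, sub_zero]

lemma top_formula (hν : τ ν = ν + 1) (hDτ : ∀ x : F, D (τ x) = τ (D x)) (hDν : D ν = 1)
    (P : Polynomial (kfix τ)) (s : ℕ) (z : F) (hz : carlitz τ ν P z = 0) :
    carlitz τ ν (P ^ s) ((⇑D)^[s] z)
      = ((-1 : ℤ) ^ s * (s.factorial : ℤ)) • carlitz τ ν ((deltaP τ D hDτ P) ^ s) z := by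
  induction s with
  | zero => simp
  | succ s ih =>
      rw [Function.iterate_succ_apply', keys τ ν D hν hDτ hDν P s ((⇑D)^[s] z)]
      have h1 : carlitz τ ν (P ^ (s + 1)) ((⇑D)^[s] z) = 0 := by
        have hp : P ^ (s + 1) = P * P ^ s := by ring
        rw [hp, carlitz_mul_apply, ih]
        rw [map_zsmul]
        have : carlitz τ ν P (carlitz τ ν (deltaP τ D hDτ P ^ s) z)
            = carlitz τ ν (deltaP τ D hDτ P ^ s) (carlitz τ ν P z) := by
          rw [← carlitz_mul_apply, ← carlitz_mul_apply, mul_comm]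
        rw [this, hz, map_zero, smul_zero]
      have h2 : carlitz τ ν (P ^ s * deltaP τ D hDτ P) ((⇑D)^[s] z)
          = ((-1 : ℤ) ^ s * (s.factorial : ℤ)) • carlitz τ ν (deltaP τ D hDτ P ^ (s + 1)) z := by
        rw [mul_comm, carlitz_mul_apply, ih, map_zsmul]
        congr 1
        rw [← carlitz_mul_apply]
        congr 1
        ring
      rw [h1, h2, map_zero, zero_sub, smul_smul]
      rw [← neg_smul]
      congr 1
      push_cast [Nat.factorial_succ]
      ring
end

section
variable (τ : F →+* F) (ν : F) (D : Derivation ℤ F F)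

lemma iter_mem (hν : τ ν = ν + 1) (hDτ : ∀ x : F, D (τ x) = τ (D x)) (hDν : D ν = 1)
    (P : Polynomial (kfix τ)) (z : F) (hz : carlitz τ ν P z = 0) (j : ℕ) :
    carlitz τ ν (P ^ (j + 1)) ((⇑D)^[j] z) = 0 := by
  induction j with
  | zero => simpa using hz
  | succ j ih =>
      rw [Function.iterate_succ_apply']
      exact mem_step τ ν D hν hDτ hDν P (j + 1) _ ih

lemma ker_mono (P : Polynomial (kfix τ)) (s t : ℕ) (h : s ≤ t) (z : F)
    (hz : carlitz τ ν (P ^ s) z = 0) : carlitz τ ν (P ^ t) z = 0 := by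
  have hp : P ^ t = P ^ (t - s) * P ^ s := by
    rw [← pow_add]
    congr 1
    omega
  rw [hp, carlitz_mul_apply, hz, map_zero]

lemma coprime_kill (P Q : Polynomial (kfix τ)) (hco : IsCoprime P Q) (z : F)
    (h1 : carlitz τ ν P z = 0) (h2 : carlitz τ ν Q z = 0) : z = 0 := by
  obtain ⟨u, v, huv⟩ := hco
  have : carlitz τ ν (u * P + v * Q) z = z := by
    rw [huv, map_one]; rfl
  rw [← this, map_add (carlitz τ ν), LinearMap.add_apply, carlitz_mul_apply,
    carlitz_mul_apply, h1, h2, map_zero, map_zero, add_zero]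
end

section
variable (τ : F →+* F) (ν : F) (D : Derivation ℤ F F)

lemma indep_lemma [CharZero F] (hν : τ ν = ν + 1) (hDτ : ∀ x : F, D (τ x) = τ (D x))
    (hDν : D ν = 1) (P : Polynomial (kfix τ)) (hco : IsCoprime P (deltaP τ D hDτ P))
    (n : ℕ) (y : Fin n → F) (hyli : LinearIndependent (kfix τ) y)
    (hymem : ∀ i, carlitz τ ν P (y i) = 0) (m : ℕ) :
    LinearIndependent (kfix τ) (fun p : Fin n × Fin m => (⇑D)^[(p.2 : ℕ)] (y p.1)) := by
  induction m with
  | zero => exact linearIndependent_empty_type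
  | succ m ih =>
      rw [Fintype.linearIndependent_iff]
      intro g hg
      set DP := deltaP τ D hDτ P with hDPdef
      -- step A: apply carlitz (P ^ m) to the relation
      have hgm : ∀ i : Fin n, g (i, Fin.last m) = 0 := by
        have h2 := congrArg (carlitz τ ν (P ^ m)) hg
        rw [map_zero, map_sum] at h2
        simp only [map_smul] at h2
        rw [Fintype.sum_prod_type] at h2
        have hterm : ∀ i : Fin n,
            (∑ j : Fin (m + 1), g (i, j) • carlitz τ ν (P ^ m) ((⇑D)^[(j : ℕ)] (y i)))
            = g (i, Fin.last m) •
              (((-1 : ℤ) ^ m * (m.factorial : ℤ)) • carlitz τ ν (DP ^ m) (y i)) := by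
          intro i
          rw [Fin.sum_univ_castSucc]
          have hzero : ∀ j : Fin m,
              g (i, j.castSucc) • carlitz τ ν (P ^ m) ((⇑D)^[((j.castSucc : Fin (m+1)) : ℕ)] (y i)) = 0 := by
            intro j
            have hker : carlitz τ ν (P ^ m) ((⇑D)^[(j : ℕ)] (y i)) = 0 := by
              apply ker_mono τ ν P ((j : ℕ) + 1) m (by omega)
              exact iter_mem τ ν D hν hDτ hDν P (y i) (hymem i) (j : ℕ)
            rw [Fin.coe_castSucc, hker, smul_zero]
          rw [Finset.sum_congr rfl (fun j _ => hzero j), Finset.sum_const_zero, zero_add]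
          congr 1
          have : ((Fin.last m : Fin (m+1)) : ℕ) = m := rfl
          rw [this]
          exact top_formula τ ν D hν hDτ hDν P m (y i) (hymem i)
        rw [Finset.sum_congr rfl (fun i _ => hterm i)] at h2
        -- now: ∑ i, g(i,last) • (e • C_{DP^m} (y i)) = 0
        set e : ℤ := (-1 : ℤ) ^ m * (m.factorial : ℤ) with he
        have hee : (e : F) ≠ 0 := by
          rw [Int.cast_ne_zero]
          simp [he, Nat.factorial_ne_zero]
        have h3 : carlitz τ ν (DP ^ m) (∑ i, g (i, Fin.last m) • y i) = 0 := by
          rw [map_sum]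
          simp only [map_smul]
          have hcomm : ∀ i : Fin n, g (i, Fin.last m) • (e • carlitz τ ν (DP ^ m) (y i))
              = e • (g (i, Fin.last m) • carlitz τ ν (DP ^ m) (y i)) := by
            intro i
            rw [smul_comm]
          rw [Finset.sum_congr rfl (fun i _ => hcomm i), ← Finset.smul_sum] at h2
          have := h2
          rw [zsmul_eq_mul] at this
          rcases mul_eq_zero.1 this with h | h
          · exact absurd h hee
          · exact h
        have h4 : carlitz τ ν P (∑ i, g (i, Fin.last m) • y i) = 0 := by
          rw [map_sum]
          simp only [map_smul]
          rw [Finset.sum_congr rfl (fun i _ => by rw [hymem i, smul_zero]),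
            Finset.sum_const_zero]
        have h5 : (∑ i, g (i, Fin.last m) • y i) = 0 :=
          coprime_kill τ ν P (DP ^ m) (hco.pow_right) _ h4 h3
        exact fun i => Fintype.linearIndependent_iff.1 hyli _ h5 i
      -- step B: the remaining relation, apply induction hypothesis
      have hrest : ∀ (i : Fin n) (j : Fin m), g (i, j.castSucc) = 0 := by
        have h6 : ∑ p : Fin n × Fin m, g (p.1, p.2.castSucc) • (⇑D)^[(p.2 : ℕ)] (y p.1) = 0 := by
          rw [Fintype.sum_prod_type]
          have := hg
          rw [Fintype.sum_prod_type] at this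
          calc ∑ i, ∑ j : Fin m, g (i, j.castSucc) • (⇑D)^[(j : ℕ)] (y i)
              = ∑ i, ∑ j : Fin (m+1), g (i, j) • (⇑D)^[(j : ℕ)] (y i) := by
                refine Finset.sum_congr rfl (fun i _ => ?_)
                rw [Fin.sum_univ_castSucc]
                simp only [Fin.coe_castSucc]
                rw [hgm i, zero_smul, add_zero]
            _ = 0 := this
        intro i j
        have := Fintype.linearIndependent_iff.1 ih (fun p => g (p.1, p.2.castSucc)) h6 (i, j)
        exact this
      intro p
      rcases p with ⟨i, j⟩
      rcases Fin.eq_castSucc_or_eq_last j with ⟨j', rfl⟩ | rfl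
      · exact hrest i j'
      · exact hgm i
end


/-- if `P ∈ k[t]` is monic irreducible with `P` and `D(P)` coprime,
`n = deg P`, and `y_1, …, y_n` is a `k`-basis of `Λ_P`, then for every `r ≥ 1` the
elements `D^j(y_i)` (`1 ≤ i ≤ n`, `0 ≤ j ≤ r−1`) form a `k`-basis of `Λ_{P^r}`. -/
theorem stmt_5 {F : Type*} [Field F] [CharZero F] (τ : F →+* F) (ν : F)
    (hν : τ ν = ν + 1)
    (D : Derivation ℤ F F) (hDτ : ∀ x : F, D (τ x) = τ (D x)) (hDν : D ν = 1)
    (hdim : ∀ a : Polynomial (kfix τ), a ≠ 0 →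
      Module.finrank (kfix τ) (LinearMap.ker (carlitz τ ν a)) = a.natDegree)
    (P : Polynomial (kfix τ)) (hPmonic : P.Monic) (hPirr : Irreducible P)
    (hDP : ∀ DP : Polynomial (kfix τ),
      (∀ i : ℕ, (DP.coeff i : F) = D ((P.coeff i : F)) + ((derivative P).coeff i : F)) →
      IsCoprime P DP)
    (n : ℕ) (hn : n = P.natDegree) (y : Fin n → F)
    (hyli : LinearIndependent (kfix τ) y)
    (hyspan : Submodule.span (kfix τ) (Set.range y) = LinearMap.ker (carlitz τ ν P))
    (r : ℕ) (hr : 1 ≤ r) :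
    (∀ (i : Fin n) (j : Fin r), (⇑D)^[(j : ℕ)] (y i) ∈ LinearMap.ker (carlitz τ ν (P ^ r)))
    ∧ LinearIndependent (kfix τ) (fun p : Fin n × Fin r => (⇑D)^[(p.2 : ℕ)] (y p.1))
    ∧ Submodule.span (kfix τ) (Set.range (fun p : Fin n × Fin r => (⇑D)^[(p.2 : ℕ)] (y p.1))) =
        LinearMap.ker (carlitz τ ν (P ^ r)) := by
  have hco : IsCoprime P (deltaP τ D hDτ P) := by
    apply hDP
    intro i
    rw [deltaP_coeff]
    push_cast [Dk_coe]
    ring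
  have hymem : ∀ i, carlitz τ ν P (y i) = 0 := by
    intro i
    have : y i ∈ Submodule.span (kfix τ) (Set.range y) :=
      Submodule.subset_span (Set.mem_range_self i)
    rw [hyspan, LinearMap.mem_ker] at this
    exact this
  have hmem : ∀ (i : Fin n) (j : Fin r),
      (⇑D)^[(j : ℕ)] (y i) ∈ LinearMap.ker (carlitz τ ν (P ^ r)) := by
    intro i j
    rw [LinearMap.mem_ker]
    apply ker_mono τ ν P ((j : ℕ) + 1) r (by omega)
    exact iter_mem τ ν D hν hDτ hDν P (y i) (hymem i) (j : ℕ)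
  have hli := indep_lemma τ ν D hν hDτ hDν P hco n y hyli hymem r
  refine ⟨hmem, hli, ?_⟩
  have hPr : (P : Polynomial (kfix τ)) ^ r ≠ 0 := pow_ne_zero r hPmonic.ne_zero
  have hfr : Module.finrank (kfix τ) (LinearMap.ker (carlitz τ ν (P ^ r))) = r * n := by
    rw [hdim _ hPr, Polynomial.natDegree_pow, hn]
  have hnpos : 0 < n := hn ▸ hPirr.natDegree_pos
  haveI : FiniteDimensional (kfix τ) (LinearMap.ker (carlitz τ ν (P ^ r))) := by
    apply Module.finite_of_finrank_pos
    rw [hfr]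
    positivity
  apply Submodule.eq_of_le_of_finrank_le
  · rw [Submodule.span_le]
    rintro _ ⟨p, rfl⟩
    exact hmem p.1 p.2
  · rw [hfr, finrank_span_eq_card hli, Fintype.card_prod, Fintype.card_fin, Fintype.card_fin,
      mul_comm]
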